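/- Let J be an acyclic join with join tree T, and let J_S be a subjoin such that some relation r of J not in J_S has no associated relation: no relation r' in J_S contains all attributes of r that occur in at least one relation of J_S. Then J_S is not safe: there exists a fully reduced database D such that the output of J_S on D contains a tuple that agrees on the boundary attributes with no tuple of the output of the complement subjoin J_S^c on D. -/
import Mathlib


/-- A tuple `t` agrees with tuple `u` on the attribute set `S`. -/
def Agrees {α V : Type} (S : Set α) (t u : α → V) : Prop := ∀ a ∈ S, t a = u a

/-- The output of the natural join of the relations `R i` with schemas `sch i`. -/
def JoinOut {ι α V : Type} (sch : ι → Set α) (R : ι → Set (α → V)) : Set (α → V) :=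
  { t | ∀ i, ∃ u ∈ R i, Agrees (sch i) t u }

/-- The output of the join of the subfamily of relations indexed by `K`. -/
def SubJoinOut {ι α V : Type} (sch : ι → Set α) (R : ι → Set (α → V)) (K : Set ι) :
    Set (α → V) :=
  { t | ∀ i ∈ K, ∃ u ∈ R i, Agrees (sch i) t u }

/-- A database is fully reduced if every tuple of every relation is the projection of
some tuple in the full join output. -/
def FullyReduced {ι α V : Type} (sch : ι → Set α) (R : ι → Set (α → V)) : Prop :=
  ∀ i, ∀ u ∈ R i, ∃ t ∈ JoinOut sch R, Agrees (sch i) t u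

/-- The boundary attributes of the subjoin indexed by `K`: attributes occurring both in
some relation of the subjoin and in some relation outside it. -/
def Boundary {ι α : Type} (sch : ι → Set α) (K : Set ι) : Set α :=
  (⋃ i ∈ K, sch i) ∩ (⋃ i ∈ Kᶜ, sch i)

/-- `G` is a join tree (parse tree) of the join with relation schemas `sch`. -/
def IsJoinTree {ι α : Type} (G : SimpleGraph ι) (sch : ι → Set α) : Prop :=
  G.IsTree ∧ ∀ a : α, ∀ i j : ι, a ∈ sch i → a ∈ sch j →
    ∃ p : G.Walk i j, ∀ k ∈ p.support, a ∈ sch k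

/-- The node set `K` induces a connected subtree of `G`. -/
def ConnectedIn {ι : Type} (G : SimpleGraph ι) (K : Set ι) : Prop :=
  ∀ i ∈ K, ∀ j ∈ K, ∃ p : G.Walk i j, ∀ k ∈ p.support, k ∈ K

/-- If some external relation `r` (not in the subjoin `K`) has no associated relation
in `K` (no relation of the subjoin contains all the subjoin attributes of `r`), then
the subjoin is not safe: there is a fully reduced database on which the subjoin
output contains a tuple agreeing on the boundary attributes with no tuple of the
complement subjoin's output. -/
theorem stmt12 {ι α V : Type} [Fintype ι] [Infinite V]
    (G : SimpleGraph ι) (sch : ι → Set α) (hschfin : ∀ i, (sch i).Finite)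
    (hJT : IsJoinTree G sch) (K : Set ι)
    (r : ι) (hr : r ∉ K)
    (hnoassoc : ¬ ∃ r' ∈ K, (sch r ∩ ⋃ i ∈ K, sch i) ⊆ sch r') :
    ∃ R : ι → Set (α → V), FullyReduced sch R ∧
      ∃ tt ∈ SubJoinOut sch R K, ∀ t' ∈ SubJoinOut sch R Kᶜ,
        ¬ Agrees (Boundary sch K) tt t' := by
  classical
  push_neg at hnoassoc
  obtain ⟨x, y, hxy⟩ := exists_pair_ne V
  by_cases hK : K = ∅
  · refine ⟨fun _ => ∅, ?_, fun _ => x, ?_, ?_⟩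
    · intro i u hu; exact absurd hu (Set.notMem_empty u)
    · intro i hi; rw [hK] at hi; exact absurd hi (Set.notMem_empty i)
    · intro t' ht' _
      obtain ⟨u, hu, -⟩ := ht' r hr
      exact absurd hu (Set.notMem_empty u)
  · set B : Set α := sch r ∩ ⋃ i ∈ K, sch i with hB
    set T : α → (α → V) := fun b a => if a ∈ B ∧ a ≠ b then y else x with hT
    refine ⟨fun _ => {t | ∃ b ∈ B, t = T b}, ?_, fun a => if a ∈ B then y else x, ?_, ?_⟩
    · intro i u hu
      obtain ⟨b, hb, rfl⟩ := hu
      exact ⟨T b, fun j => ⟨T b, ⟨b, hb, rfl⟩, fun a _ => rfl⟩, fun a _ => rfl⟩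
    · intro i hi
      obtain ⟨b, hbB, hbns⟩ := Set.not_subset.mp (hnoassoc i hi)
      refine ⟨T b, ⟨b, hbB, rfl⟩, ?_⟩
      intro a ha
      by_cases haB : a ∈ B
      · have hab : a ≠ b := fun h => hbns (h ▸ ha)
        simp [hT, haB, hab]
      · simp [hT, haB]
    · intro t' ht' hag
      obtain ⟨u, ⟨b, hbB, rfl⟩, hagr⟩ := ht' r hr
      have hbBd : b ∈ Boundary sch K := ⟨hbB.2, Set.mem_biUnion hr hbB.1⟩
      have h1 : (if b ∈ B then y else x) = t' b := hag b hbBd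
      have h2 : t' b = T b b := hagr b hbB.1
      rw [h2] at h1
      simp [hT, hbB] at h1
      exact hxy h1.symm
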